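/- Let s, g, k be natural numbers with s ≥ 1, s < g ≤ k, and set f = ⌊(g−1)/s⌋ (so f ≥ 1). Then Σ_{j=f·s}^{k−(g−f·s)} (C(k−j, g−s·f) + f − 1)·C(j−1, f·s−1) = C(k, g) + (f−1)·C(k−g+f·s, f·s). Consequently, the total number of bit additions of the algorithm with saved additions on an n-column matrix — namely f−1 row additions for each extendable (f·s)-element prefix plus one row addition for each g-element combination, each row addition costing n bit additions — equals [Σ_{j=f·s}^{k−(g−f·s)} (C(k−j, g−s·f)+f−1)·C(j−1, f·s−1)]·n. -/
import Mathlib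

open Finset

lemma sum_shift_choose (a M : ℕ) :
    ∑ t ∈ range (M + 1), (a + t).choose a = (a + M + 1).choose (a + 1) := by
  have h := Nat.sum_Icc_choose (a + M) a
  have h2 : Icc a (a + M) = (Icc 0 M).map (addLeftEmbedding a) := by
    rw [map_add_left_Icc]; simp
  have h3 : range (M + 1) = Icc 0 M := by
    rw [← Nat.Ico_zero_eq_range, Finset.Ico_add_one_right_eq_Icc]
  rw [h2, Finset.sum_map] at h
  rw [h3, ← h]
  apply Finset.sum_congr rfl
  intro t _
  simp [addLeftEmbedding_apply]

lemma vander : ∀ N b a : ℕ,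
    ∑ t ∈ range (N + 1), (a + t).choose a * (b + (N - t)).choose b
      = (a + b + N + 1).choose (a + b + 1) := by
  intro N
  induction N with
  | zero => intro b a; simp
  | succ N ih =>
    intro b
    induction b with
    | zero =>
      intro a
      simpa using sum_shift_choose a (N + 1)
    | succ b ihb =>
      intro a
      have key : ∀ t ∈ range (N + 1),
          (a + t).choose a * ((b + 1) + (N + 1 - t)).choose (b + 1)
            = (a + t).choose a * (b + (N + 1 - t)).choose b
              + (a + t).choose a * ((b + 1) + (N - t)).choose (b + 1) := by
        intro t ht
        rw [mem_range] at ht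
        have h1 : (b + 1) + (N + 1 - t) = ((b + 1) + (N - t)) + 1 := by omega
        have h2 : b + (N + 1 - t) = (b + 1) + (N - t) := by omega
        rw [h1, Nat.choose_succ_succ, mul_add, h2]
      rw [Finset.sum_range_succ, Finset.sum_congr rfl key, Finset.sum_add_distrib]
      simp only [Nat.sub_self, Nat.add_zero, Nat.choose_self, mul_one]
      have e1 : ∑ t ∈ range (N + 1), (a + t).choose a * (b + (N + 1 - t)).choose b
            + (a + (N + 1)).choose a
          = (a + b + (N + 1) + 1).choose (a + b + 1) := by
        rw [← ihb a]
        conv_rhs => rw [Finset.sum_range_succ]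
        simp
      have e2 : ∑ t ∈ range (N + 1), (a + t).choose a * ((b + 1) + (N - t)).choose (b + 1)
          = (a + (b + 1) + N + 1).choose (a + (b + 1) + 1) := ih (b + 1) a
      have goal : (a + (b + 1) + (N + 1) + 1).choose (a + (b + 1) + 1)
          = (a + b + (N + 1) + 1).choose (a + b + 1)
            + (a + (b + 1) + N + 1).choose (a + (b + 1) + 1) := by
        have h3 : a + (b + 1) + (N + 1) + 1 = (a + b + (N + 1) + 1) + 1 := by omega
        have h4 : a + (b + 1) + 1 = (a + b + 1) + 1 := by omega
        have h5 : a + b + (N + 1) + 1 = a + (b + 1) + N + 1 := by omega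
        rw [h3, h4, Nat.choose_succ_succ, Nat.succ_eq_add_one, ← h4, ← h5]
      rw [goal, ← e1, ← e2]
      ring

lemma hock2 (m M : ℕ) (hm : 1 ≤ m) :
    ∑ j ∈ Icc m M, (j - 1).choose (m - 1) = M.choose m := by
  rcases Nat.lt_or_ge M m with h | h
  · rw [Finset.Icc_eq_empty (by omega)]
    simp [Nat.choose_eq_zero_of_lt h]
  · have h1 := Nat.sum_Icc_choose (M - 1) (m - 1)
    have h2 : Icc m M = (Icc (m - 1) (M - 1)).map (addLeftEmbedding 1) := by
      rw [map_add_left_Icc]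
      congr 1 <;> omega
    rw [h2, Finset.sum_map]
    have h3 : ∀ i ∈ Icc (m-1) (M-1),
        ((addLeftEmbedding 1 i) - 1).choose (m - 1) = i.choose (m-1) := by
      intro i _
      simp [addLeftEmbedding_apply]
    rw [Finset.sum_congr rfl h3, h1]
    have h4 : M - 1 + 1 = M := by omega
    have h5 : m - 1 + 1 = m := by omega
    rw [h4, h5]

/-- Cost identity for the algorithm with saved additions: with
`f = ⌊(g-1)/s⌋`,
`Σ_{j=f·s}^{k-(g-f·s)} (C(k-j, g-s·f) + f - 1) · C(j-1, f·s-1)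
  = C(k,g) + (f-1)·C(k-g+f·s, f·s)`,
and consequently the total number of bit additions on an `n`-column matrix,
namely `f-1` row additions per extendable `(f·s)`-element prefix plus one row
addition per `g`-element combination (each row addition costing `n` bit
additions), equals the sum times `n`. -/
theorem saved_additions_algorithm_cost (s g k n : ℕ) (hs : 1 ≤ s)
    (hsg : s < g) (hgk : g ≤ k) :
    (∑ j ∈ Finset.Icc ((g - 1) / s * s) (k - (g - (g - 1) / s * s)),
        ((k - j).choose (g - s * ((g - 1) / s)) + (g - 1) / s - 1) *
          (j - 1).choose ((g - 1) / s * s - 1))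
      = k.choose g +
          ((g - 1) / s - 1) * (k - g + (g - 1) / s * s).choose ((g - 1) / s * s) ∧
    ((g - 1) / s - 1) * (k - g + (g - 1) / s * s).choose ((g - 1) / s * s) * n
        + k.choose g * n
      = (∑ j ∈ Finset.Icc ((g - 1) / s * s) (k - (g - (g - 1) / s * s)),
          ((k - j).choose (g - s * ((g - 1) / s)) + (g - 1) / s - 1) *
            (j - 1).choose ((g - 1) / s * s - 1)) * n := by
  have hf : 1 ≤ (g - 1) / s := by
    rw [Nat.one_le_div_iff (by omega)]; omega
  set f := (g - 1) / s with hfdef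
  have hmc : s * f = f * s := Nat.mul_comm s f
  set m := f * s with hmdef
  have hmle : m ≤ g - 1 := Nat.div_mul_le_self (g - 1) s
  have hm1 : 1 ≤ m := le_trans hf (Nat.le_mul_of_pos_right f hs)
  have hmain :
      (∑ j ∈ Finset.Icc m (k - (g - m)),
          ((k - j).choose (g - m) + f - 1) * (j - 1).choose (m - 1))
        = k.choose g + (f - 1) * (k - g + m).choose m := by
    have hsplit : ∀ j ∈ Finset.Icc m (k - (g - m)),
        ((k - j).choose (g - m) + f - 1) * (j - 1).choose (m - 1)
          = (k - j).choose (g - m) * (j - 1).choose (m - 1)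
            + (f - 1) * (j - 1).choose (m - 1) := by
      intro j _
      have : (k - j).choose (g - m) + f - 1
          = (k - j).choose (g - m) + (f - 1) := by omega
      rw [this, add_mul]
    rw [Finset.sum_congr rfl hsplit, Finset.sum_add_distrib, ← Finset.mul_sum,
      hock2 m (k - (g - m)) hm1]
    have hA : (∑ j ∈ Finset.Icc m (k - (g - m)),
        (k - j).choose (g - m) * (j - 1).choose (m - 1)) = k.choose g := by
      set N := k - g with hN
      have hIcc : Finset.Icc m (k - (g - m))
          = (Finset.range (N + 1)).map (addLeftEmbedding m) := by
        rw [← Nat.Ico_zero_eq_range, Finset.Ico_add_one_right_eq_Icc, Finset.map_add_left_Icc]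
        congr 1
        omega
      rw [hIcc, Finset.sum_map]
      have hterm : ∀ t ∈ Finset.range (N + 1),
          (k - (addLeftEmbedding m t)).choose (g - m)
              * ((addLeftEmbedding m t) - 1).choose (m - 1)
            = ((m - 1) + t).choose (m - 1) * ((g - m) + (N - t)).choose (g - m) := by
        intro t ht
        rw [Finset.mem_range] at ht
        rw [addLeftEmbedding_apply]
        have e1 : k - (m + t) = (g - m) + (N - t) := by omega
        have e2 : m + t - 1 = (m - 1) + t := by omega
        rw [e1, e2, mul_comm]
      rw [Finset.sum_congr rfl hterm, vander N (g - m) (m - 1)]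
      congr 1 <;> omega
    have hkg : k - (g - m) = k - g + m := by omega
    rw [hA, hkg]
  rw [hmc]
  constructor
  · exact hmain
  · rw [hmain]; ring
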